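/- Let n = p_1^{n_1}⋯p_r^{n_r} with r ≥ 2 and primes p_1 < ... < p_r, and let i < k in [r]. Then φ(n/p_i) ≥ φ(n/p_k), with equality if and only if (i,k) = (1,2), (p_1,p_2) = (2,3), n_1 ≥ 2 and n_2 = 1. -/

import Mathlib

open Finset

lemma helper9 (p m e : ℕ) (hp : p.Prime) (hpm : ¬ p ∣ m) (he : 1 ≤ e) :
    Nat.totient (p ^ e * m / p) * (if 2 ≤ e then p else p - 1) =
      Nat.totient (p ^ e * m) := by
  have hcop : ∀ t, Nat.Coprime (p ^ t) m :=
    fun t => ((Nat.Prime.coprime_iff_not_dvd hp).mpr hpm).pow_left _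
  have hdiv : p ^ e * m / p = p ^ (e - 1) * m := by
    have h1 : p ^ e = p * p ^ (e - 1) := by
      conv_lhs => rw [show e = 1 + (e - 1) by omega]
      rw [pow_add, pow_one]
    rw [h1, mul_assoc, Nat.mul_div_cancel_left _ hp.pos]
  rw [hdiv, Nat.totient_mul (hcop _), Nat.totient_mul (hcop _)]
  rcases Nat.lt_or_ge e 2 with h2 | h2
  · have he1 : e = 1 := by omega
    simp [he1, Nat.totient_prime hp, Nat.mul_comm, Nat.mul_right_comm]
  · rw [if_pos h2, Nat.totient_prime_pow hp (by omega), Nat.totient_prime_pow hp (by omega)]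
    have hpp : p ^ (e - 1 - 1) * p = p ^ (e - 1) := by
      rw [← pow_succ]; congr 1; omega
    calc p ^ (e - 1 - 1) * (p - 1) * Nat.totient m * p
        = p ^ (e - 1 - 1) * p * ((p - 1) * Nat.totient m) := by ring
      _ = p ^ (e - 1) * (p - 1) * Nat.totient m := by rw [hpp]; ring

theorem stmt_9 (r : ℕ) (hr : 2 ≤ r) (p e : ℕ → ℕ)
    (hp : ∀ i < r, (p i).Prime)
    (hmono : ∀ i j, i < j → j < r → p i < p j)
    (he : ∀ i < r, 1 ≤ e i)
    (n : ℕ) (hn : n = ∏ i ∈ Finset.range r, p i ^ e i)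
    (i k : ℕ) (hik : i < k) (hk : k < r) :
    Nat.totient (n / p i) ≥ Nat.totient (n / p k) ∧
    (Nat.totient (n / p i) = Nat.totient (n / p k) ↔
      i = 0 ∧ k = 1 ∧ p 0 = 2 ∧ p 1 = 3 ∧ 2 ≤ e 0 ∧ e 1 = 1) := by
  have hi : i < r := lt_trans hik hk
  have hinj : ∀ a b, a < r → b < r → p a = p b → a = b := by
    intro a b ha hb hab
    rcases lt_trichotomy a b with h | h | h
    · exact absurd hab (Nat.ne_of_lt (hmono a b h hb))
    · exact h
    · exact absurd hab.symm (Nat.ne_of_lt (hmono b a h ha))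
  set c : ℕ → ℕ := fun j => if 2 ≤ e j then p j else p j - 1 with hc
  have hn0 : 0 < n := by
    rw [hn]
    exact Finset.prod_pos fun j hj => pow_pos (hp j (mem_range.mp hj)).pos _
  have key : ∀ j, j < r → Nat.totient (n / p j) * c j = Nat.totient n := by
    intro j hj
    have hmul : n = p j ^ e j * ∏ t ∈ (range r).erase j, p t ^ e t := by
      rw [hn, ← Finset.mul_prod_erase _ _ (mem_range.mpr hj)]
    have hpm : ¬ p j ∣ ∏ t ∈ (range r).erase j, p t ^ e t := by
      intro hdvd
      obtain ⟨t, ht, hdt⟩ := (Prime.dvd_finset_prod_iff (hp j hj).prime _).mp hdvd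
      have := (hp j hj).dvd_of_dvd_pow hdt
      have htr : t < r := mem_range.mp (Finset.mem_of_mem_erase ht)
      have : j = t :=
        hinj j t hj htr ((Nat.prime_dvd_prime_iff_eq (hp j hj) (hp t htr)).mp this)
      exact (Finset.ne_of_mem_erase ht) this.symm
    rw [hmul]
    exact helper9 _ _ _ (hp j hj) hpm (he j hj)
  have hdvdn : ∀ j, j < r → p j ∣ n := by
    intro j hj
    rw [hn]
    exact dvd_trans (dvd_pow_self _ (by have := he j hj; omega))
      (Finset.dvd_prod_of_mem _ (mem_range.mpr hj))
  have hq0 : ∀ j, j < r → 0 < n / p j := fun j hj =>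
    Nat.div_pos (Nat.le_of_dvd hn0 (hdvdn j hj)) (hp j hj).pos
  have hpik : p i < p k := hmono i k hik hk
  have hci : c i ≤ p i := by
    simp only [hc]; split <;> omega
  have hck : p k - 1 ≤ c k := by
    simp only [hc]; split <;> omega
  have hcik : c i ≤ c k := by
    have := (hp i hi).two_le
    omega
  have hci0 : 0 < c i := by
    have := (hp i hi).two_le
    simp only [hc]; split <;> omega
  have keyi := key i hi
  have keyk := key k hk
  have hineq : Nat.totient (n / p k) ≤ Nat.totient (n / p i) := by
    have h1 : Nat.totient (n / p k) * c i ≤ Nat.totient (n / p k) * c k :=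
      Nat.mul_le_mul_left _ hcik
    rw [keyk, ← keyi] at h1
    exact Nat.le_of_mul_le_mul_right h1 hci0
  refine ⟨hineq, ?_, ?_⟩
  · intro heq
    have hccik : c i = c k := by
      have h0 : 0 < Nat.totient (n / p i) := Nat.totient_pos.mpr (hq0 i hi)
      have : Nat.totient (n / p i) * c i = Nat.totient (n / p i) * c k := by
        rw [keyi, heq, keyk]
      exact Nat.eq_of_mul_eq_mul_left h0 this
    -- deduce e i ≥ 2, e k = 1, p i = p k - 1
    have hei2 : 2 ≤ e i := by
      by_contra h
      simp only [hc, if_neg h] at hccik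
      have := (hp k hk).two_le
      split_ifs at hccik <;> omega
    have hek1 : e k = 1 := by
      by_contra h
      have h2 : 2 ≤ e k := by have := he k hk; omega
      simp only [hc, if_pos hei2, if_pos h2] at hccik
      omega
    have hsucc : p k = p i + 1 := by
      simp only [hc, if_pos hei2, if_neg (by omega : ¬ 2 ≤ e k)] at hccik
      have := (hp k hk).two_le
      omega
    have hpi2 : p i = 2 := by
      by_contra h
      have hodd : Odd (p i) := (hp i hi).odd_of_ne_two h
      have heven : Even (p k) := by
        rcases hodd with ⟨t, ht⟩
        exact ⟨t + 1, by omega⟩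
      have := ((hp k hk).even_iff).mp heven
      have := (hp i hi).two_le
      omega
    have hpk3 : p k = 3 := by omega
    have hi0 : i = 0 := by
      by_contra h
      have h0i : 0 < i := by omega
      have := hmono 0 i h0i hi
      have := (hp 0 (by omega)).two_le
      omega
    have hk1 : k = 1 := by
      by_contra h
      have h1k : 1 < k := by omega
      have h01 := hmono 0 1 (by omega) (by omega)
      have h1k' := hmono 1 k h1k hk
      rw [hi0] at hpi2
      omega
    subst hi0 hk1
    exact ⟨rfl, rfl, hpi2, hpk3, hei2, hek1⟩
  · rintro ⟨hi0, hk1, hp0, hp1, he0, he1⟩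
    subst hi0 hk1
    have hccik : c 0 = c 1 := by
      simp only [hc, if_pos he0, if_neg (by omega : ¬ 2 ≤ e 1), hp0, hp1]
    have h1 : Nat.totient (n / p 0) * c 0 = Nat.totient (n / p 1) * c 0 := by
      rw [keyi, hccik, keyk]
    have h0 : 0 < c 0 := hci0
    exact Nat.eq_of_mul_eq_mul_right h0 h1
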